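/- There is no unit vector ψ ∈ ℂ⁵ that is simultaneously unbiased with respect to the eigenbases of the spin-2 operators J_x, J_y and J_z; i.e., no perfect quantum protractor exists for a spin-2 system. -/

import Mathlib

open Complex Real BigOperators Matrix

noncomputable section

def J2x : Matrix (Fin 5) (Fin 5) ℂ :=
  !![0, 1, 0, 0, 0;
     1, 0, (Real.sqrt (3/2) : ℂ), 0, 0;
     0, (Real.sqrt (3/2) : ℂ), 0, (Real.sqrt (3/2) : ℂ), 0;
     0, 0, (Real.sqrt (3/2) : ℂ), 0, 1;
     0, 0, 0, 1, 0]
def J2y : Matrix (Fin 5) (Fin 5) ℂ :=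
  Complex.I • !![0, -1, 0, 0, 0;
                 1, 0, -(Real.sqrt (3/2) : ℂ), 0, 0;
                 0, (Real.sqrt (3/2) : ℂ), 0, -(Real.sqrt (3/2) : ℂ), 0;
                 0, 0, (Real.sqrt (3/2) : ℂ), 0, -1;
                 0, 0, 0, 1, 0]
def J2z : Matrix (Fin 5) (Fin 5) ℂ :=
  !![2, 0, 0, 0, 0; 0, 1, 0, 0, 0; 0, 0, 0, 0, 0; 0, 0, 0, -1, 0; 0, 0, 0, 0, -2]

set_option maxHeartbeats 1600000 in
private lemma protractor_key (a x0 x1 x2 x3 x4 y0 y1 y2 y3 y4 : ℝ)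
    (ha : a^2 = 3/2) (ha0 : 0 < a)
    (hZ0 : x0^2 + y0^2 = 1/5) (hZ1 : x1^2 + y1^2 = 1/5) (hZ2 : x2^2 + y2^2 = 1/5)
    (hZ3 : x3^2 + y3^2 = 1/5) (hZ4 : x4^2 + y4^2 = 1/5)
    (hEX0 : (-(a/2)*x0 + (1/2)*x2 - (a/2)*x4)^2 + (-(a/2)*y0 + (1/2)*y2 - (a/2)*y4)^2 = 1/5)
    (hEY0 : (-(a/2)*x0 - (1/2)*x2 - (a/2)*x4)^2 + (-(a/2)*y0 - (1/2)*y2 - (a/2)*y4)^2 = 1/5)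
    (hEX1 : (-(1/2)*x0 - (1/2)*x1 + (1/2)*x3 + (1/2)*x4)^2
          + (-(1/2)*y0 - (1/2)*y1 + (1/2)*y3 + (1/2)*y4)^2 = 1/5)
    (hEXm1 : ((1/2)*x0 - (1/2)*x1 + (1/2)*x3 - (1/2)*x4)^2
          + ((1/2)*y0 - (1/2)*y1 + (1/2)*y3 - (1/2)*y4)^2 = 1/5)
    (hEX2 : ((1/4)*x0 + (1/2)*x1 + (a/2)*x2 + (1/2)*x3 + (1/4)*x4)^2
          + ((1/4)*y0 + (1/2)*y1 + (a/2)*y2 + (1/2)*y3 + (1/4)*y4)^2 = 1/5)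
    (hEXm2 : ((1/4)*x0 - (1/2)*x1 + (a/2)*x2 - (1/2)*x3 + (1/4)*x4)^2
          + ((1/4)*y0 - (1/2)*y1 + (a/2)*y2 - (1/2)*y3 + (1/4)*y4)^2 = 1/5) :
    False := by
  have hB1 : x0*x4 + y0*y4 = 0 := by
    linear_combination (2/3)*hEX0 + (2/3)*hEY0 - (1/3)*((x0+x4)^2+(y0+y4)^2)*ha
      - (1/3)*hZ2 - (1/2)*hZ0 - (1/2)*hZ4
  have hB2a : a * ((x0+x4)*x2 + (y0+y4)*y2) = 0 := by linear_combination hEY0 - hEX0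
  have hB2 : (x0+x4)*x2 + (y0+y4)*y2 = 0 := by
    rcases mul_eq_zero.mp hB2a with h | h
    · exact absurd h ha0.ne'
    · exact h
  have hB3 : x1*x3 + y1*y3 = 0 := by
    linear_combination (1/2)*hZ0 + (1/2)*hZ1 + (1/2)*hZ3 + (1/2)*hZ4 - hEX1 - hEXm1 - hB1
  have hT4 : (x0-x4)*(x1-x3) + (y0-y4)*(y1-y3) = 0 := by linear_combination hEX1 - hEXm1
  have hB6 : (x0+x4)*(x1+x3) + (y0+y4)*(y1+y3)
      + 2*a*(x2*(x1+x3) + y2*(y1+y3)) = 0 := by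
    linear_combination 2*hEX2 - 2*hEXm2
  obtain ⟨s, hsdef⟩ : ∃ s : ℝ, s = 5*(y0*x4 - x0*y4) := ⟨_, rfl⟩
  obtain ⟨t, htdef⟩ : ∃ t : ℝ, t = 5*(y1*x3 - x1*y3) := ⟨_, rfl⟩
  have hs2 : s^2 = 1 := by
    linear_combination (s + 5*(y0*x4 - x0*y4))*hsdef
      + (25*(x4^2+y4^2))*hZ0 + 5*hZ4 - (25*(x0*x4+y0*y4))*hB1
  have ht2 : t^2 = 1 := by
    linear_combination (t + 5*(y1*x3 - x1*y3))*htdef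
      + (25*(x3^2+y3^2))*hZ1 + 5*hZ3 - (25*(x1*x3+y1*y3))*hB3
  have hsum4 : (x4 - s*y0)^2 + (y4 + s*x0)^2 = 0 := by
    linear_combination hZ4 + s^2*hZ0 - (1/5)*hs2 + (2*s/5)*hsdef
  have hsum3 : (x3 - t*y1)^2 + (y3 + t*x1)^2 = 0 := by
    linear_combination hZ3 + t^2*hZ1 - (1/5)*ht2 + (2*t/5)*htdef
  have hx4 : x4 = s*y0 := by
    have h1 : (x4 - s*y0)^2 = 0 :=
      le_antisymm (by linarith [hsum4, sq_nonneg (y4 + s*x0)]) (sq_nonneg _)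
    have := sq_eq_zero_iff.mp h1
    linarith
  have hy4 : y4 = -(s*x0) := by
    have h1 : (y4 + s*x0)^2 = 0 :=
      le_antisymm (by linarith [hsum4, sq_nonneg (x4 - s*y0)]) (sq_nonneg _)
    have := sq_eq_zero_iff.mp h1
    linarith
  have hx3 : x3 = t*y1 := by
    have h1 : (x3 - t*y1)^2 = 0 :=
      le_antisymm (by linarith [hsum3, sq_nonneg (y3 + t*x1)]) (sq_nonneg _)
    have := sq_eq_zero_iff.mp h1
    linarith
  have hy3 : y3 = -(t*x1) := by
    have h1 : (y3 + t*x1)^2 = 0 :=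
      le_antisymm (by linarith [hsum3, sq_nonneg (x3 - t*y1)]) (sq_nonneg _)
    have := sq_eq_zero_iff.mp h1
    linarith
  simp only [hx4, hy4, hx3, hy3] at hT4 hB2 hB6
  have hDsub : (x0+s*y0)*(x1+t*y1) + (y0-s*x0)*(y1-t*x1) = 0 := by
    linear_combination (s*t)*hT4 + (-((x0*x1+y0*y1)*t^2) + (y0*x1-x0*y1)*t)*hs2
      + (-(x0*x1+y0*y1) - (y0*x1-x0*y1)*s)*ht2
  have hDcpa : (2*a) * (x2*(x1+t*y1) + y2*(y1-t*x1)) = 0 := by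
    linear_combination hB6 - hDsub
  have hDcp : x2*(x1+t*y1) + y2*(y1-t*x1) = 0 := by
    rcases mul_eq_zero.mp hDcpa with h | h
    · linarith
    · exact h
  have hK2 : ((x0+s*y0)*(y1-t*x1) - (y0-s*x0)*(x1+t*y1))^2 = 4/25 := by
    linear_combination ((s-t)*(y0*x1-x0*y1) - (1+s*t)*(x0*x1+y0*y1))*hT4
      + (4*(x1^2+y1^2))*hZ0 + (4/5)*hZ1
      + ((x0^2+y0^2)*(x1^2+y1^2)*(t^2+1) - 4*(y0*x1-x0*y1)*(x0*x1+y0*y1)*t)*hs2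
      + (2*(x0^2+y0^2)*(x1^2+y1^2) + 4*(y0*x1-x0*y1)*(x0*x1+y0*y1)*s)*ht2
  have hx2K : x2*((x0+s*y0)*(y1-t*x1) - (y0-s*x0)*(x1+t*y1)) = 0 := by
    linear_combination (y1-t*x1)*hB2 - (y0-s*x0)*hDcp
  have hy2K : y2*((x0+s*y0)*(y1-t*x1) - (y0-s*x0)*(x1+t*y1)) = 0 := by
    linear_combination (x0+s*y0)*hDcp - (x1+t*y1)*hB2
  have hfin : (4:ℝ)/125 = 0 := by
    linear_combination (x2*((x0+s*y0)*(y1-t*x1) - (y0-s*x0)*(x1+t*y1)))*hx2K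
      + (y2*((x0+s*y0)*(y1-t*x1) - (y0-s*x0)*(x1+t*y1)))*hy2K
      - ((x0+s*y0)*(y1-t*x1) - (y0-s*x0)*(x1+t*y1))^2*hZ2 - (1/5)*hK2
  norm_num at hfin

private def Jxg (c : ℂ) : Matrix (Fin 5) (Fin 5) ℂ :=
  !![0, 1, 0, 0, 0;
     1, 0, c, 0, 0;
     0, c, 0, c, 0;
     0, 0, c, 0, 1;
     0, 0, 0, 1, 0]

private def Jyg (c : ℂ) : Matrix (Fin 5) (Fin 5) ℂ :=
  Complex.I • !![0, -1, 0, 0, 0;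
                 1, 0, -c, 0, 0;
                 0, c, 0, -c, 0;
                 0, 0, c, 0, -1;
                 0, 0, 0, 1, 0]

private lemma ov (r0 r1 r2 r3 r4 : ℝ) (ψ : Fin 5 → ℂ) :
    ‖∑ i, star ((![(r0:ℂ), r1, r2, r3, r4]) i) * ψ i‖ ^ 2
      = (r0*(ψ 0).re + r1*(ψ 1).re + r2*(ψ 2).re + r3*(ψ 3).re + r4*(ψ 4).re)^2
      + (r0*(ψ 0).im + r1*(ψ 1).im + r2*(ψ 2).im + r3*(ψ 3).im + r4*(ψ 4).im)^2 := by
  rw [Fin.sum_univ_five]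
  rw [Complex.sq_norm, Complex.normSq_apply]
  simp [Complex.add_re, Complex.add_im, Complex.mul_re, Complex.mul_im, Complex.conj_ofReal]
  ring

private lemma nv (r0 r1 r2 r3 r4 : ℝ) :
    ∑ i, ‖(![(r0:ℂ), r1, r2, r3, r4]) i‖ ^ 2 = r0^2+r1^2+r2^2+r3^2+r4^2 := by
  rw [Fin.sum_univ_five]
  simp [Complex.norm_real, sq_abs]

private lemma mvZ0 : J2z.mulVec ![((1:ℝ):ℂ), ((0:ℝ):ℂ), ((0:ℝ):ℂ), ((0:ℝ):ℂ), ((0:ℝ):ℂ)]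
    = (2:ℂ) • ![((1:ℝ):ℂ), ((0:ℝ):ℂ), ((0:ℝ):ℂ), ((0:ℝ):ℂ), ((0:ℝ):ℂ)] := by
  funext i
  fin_cases i <;> simp [J2z, Matrix.mulVec, dotProduct, Fin.sum_univ_five]

private lemma mvZ1 : J2z.mulVec ![((0:ℝ):ℂ), ((1:ℝ):ℂ), ((0:ℝ):ℂ), ((0:ℝ):ℂ), ((0:ℝ):ℂ)]
    = (1:ℂ) • ![((0:ℝ):ℂ), ((1:ℝ):ℂ), ((0:ℝ):ℂ), ((0:ℝ):ℂ), ((0:ℝ):ℂ)] := by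
  funext i
  fin_cases i <;> simp [J2z, Matrix.mulVec, dotProduct, Fin.sum_univ_five]

private lemma mvZ2 : J2z.mulVec ![((0:ℝ):ℂ), ((0:ℝ):ℂ), ((1:ℝ):ℂ), ((0:ℝ):ℂ), ((0:ℝ):ℂ)]
    = (0:ℂ) • ![((0:ℝ):ℂ), ((0:ℝ):ℂ), ((1:ℝ):ℂ), ((0:ℝ):ℂ), ((0:ℝ):ℂ)] := by
  funext i
  fin_cases i <;> simp [J2z, Matrix.mulVec, dotProduct, Fin.sum_univ_five]

private lemma mvZ3 : J2z.mulVec ![((0:ℝ):ℂ), ((0:ℝ):ℂ), ((0:ℝ):ℂ), ((1:ℝ):ℂ), ((0:ℝ):ℂ)]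
    = (-1:ℂ) • ![((0:ℝ):ℂ), ((0:ℝ):ℂ), ((0:ℝ):ℂ), ((1:ℝ):ℂ), ((0:ℝ):ℂ)] := by
  funext i
  fin_cases i <;> simp [J2z, Matrix.mulVec, dotProduct, Fin.sum_univ_five]

private lemma mvZ4 : J2z.mulVec ![((0:ℝ):ℂ), ((0:ℝ):ℂ), ((0:ℝ):ℂ), ((0:ℝ):ℂ), ((1:ℝ):ℂ)]
    = (-2:ℂ) • ![((0:ℝ):ℂ), ((0:ℝ):ℂ), ((0:ℝ):ℂ), ((0:ℝ):ℂ), ((1:ℝ):ℂ)] := by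
  funext i
  fin_cases i <;> simp [J2z, Matrix.mulVec, dotProduct, Fin.sum_univ_five]

private lemma mvX2 (r : ℝ) (hr : (r:ℂ)*(r:ℂ) = 3/2) :
    (Jxg (r:ℂ)).mulVec ![((1/4:ℝ):ℂ), ((1/2:ℝ):ℂ), ((r/2:ℝ):ℂ), ((1/2:ℝ):ℂ), ((1/4:ℝ):ℂ)]
    = (2:ℂ) • ![((1/4:ℝ):ℂ), ((1/2:ℝ):ℂ), ((r/2:ℝ):ℂ), ((1/2:ℝ):ℂ), ((1/4:ℝ):ℂ)] := by
  funext i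
  fin_cases i <;>
    simp [Jxg, Matrix.mulVec, dotProduct, Fin.sum_univ_five] <;>
    push_cast <;>
    first | ring1 | linear_combination (1/2)*hr

private lemma mvXm2 (r : ℝ) (hr : (r:ℂ)*(r:ℂ) = 3/2) :
    (Jxg (r:ℂ)).mulVec ![((1/4:ℝ):ℂ), ((-(1/2):ℝ):ℂ), ((r/2:ℝ):ℂ), ((-(1/2):ℝ):ℂ), ((1/4:ℝ):ℂ)]
    = (-2:ℂ) • ![((1/4:ℝ):ℂ), ((-(1/2):ℝ):ℂ), ((r/2:ℝ):ℂ), ((-(1/2):ℝ):ℂ), ((1/4:ℝ):ℂ)] := by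
  funext i
  fin_cases i <;>
    simp [Jxg, Matrix.mulVec, dotProduct, Fin.sum_univ_five] <;>
    push_cast <;>
    first | ring1 | linear_combination (1/2)*hr

private lemma mvX1 (r : ℝ) :
    (Jxg (r:ℂ)).mulVec ![((-(1/2):ℝ):ℂ), ((-(1/2):ℝ):ℂ), ((0:ℝ):ℂ), ((1/2:ℝ):ℂ), ((1/2:ℝ):ℂ)]
    = (1:ℂ) • ![((-(1/2):ℝ):ℂ), ((-(1/2):ℝ):ℂ), ((0:ℝ):ℂ), ((1/2:ℝ):ℂ), ((1/2:ℝ):ℂ)] := by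
  funext i
  fin_cases i <;>
    simp [Jxg, Matrix.mulVec, dotProduct, Fin.sum_univ_five] <;>
    push_cast <;>
    ring1

private lemma mvXm1 (r : ℝ) :
    (Jxg (r:ℂ)).mulVec ![((1/2:ℝ):ℂ), ((-(1/2):ℝ):ℂ), ((0:ℝ):ℂ), ((1/2:ℝ):ℂ), ((-(1/2):ℝ):ℂ)]
    = (-1:ℂ) • ![((1/2:ℝ):ℂ), ((-(1/2):ℝ):ℂ), ((0:ℝ):ℂ), ((1/2:ℝ):ℂ), ((-(1/2):ℝ):ℂ)] := by
  funext i
  fin_cases i <;>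
    simp [Jxg, Matrix.mulVec, dotProduct, Fin.sum_univ_five] <;>
    push_cast <;>
    ring1

private lemma mvX0 (r : ℝ) :
    (Jxg (r:ℂ)).mulVec ![((-(r/2):ℝ):ℂ), ((0:ℝ):ℂ), ((1/2:ℝ):ℂ), ((0:ℝ):ℂ), ((-(r/2):ℝ):ℂ)]
    = (0:ℂ) • ![((-(r/2):ℝ):ℂ), ((0:ℝ):ℂ), ((1/2:ℝ):ℂ), ((0:ℝ):ℂ), ((-(r/2):ℝ):ℂ)] := by
  funext i
  fin_cases i <;>
    simp [Jxg, Matrix.mulVec, dotProduct, Fin.sum_univ_five] <;>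
    push_cast <;>
    ring1

private lemma mvY0 (r : ℝ) :
    (Jyg (r:ℂ)).mulVec ![((-(r/2):ℝ):ℂ), ((0:ℝ):ℂ), ((-(1/2):ℝ):ℂ), ((0:ℝ):ℂ), ((-(r/2):ℝ):ℂ)]
    = (0:ℂ) • ![((-(r/2):ℝ):ℂ), ((0:ℝ):ℂ), ((-(1/2):ℝ):ℂ), ((0:ℝ):ℂ), ((-(r/2):ℝ):ℂ)] := by
  funext i
  fin_cases i <;>
    simp [Jyg, Matrix.smul_apply, Matrix.mulVec, dotProduct, Fin.sum_univ_five] <;>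
    push_cast <;>
    ring1

/-- There is no unit vector `ψ ∈ ℂ⁵` that is simultaneously unbiased with respect to the
eigenbases of the spin-2 operators `J_x, J_y, J_z`: no perfect quantum protractor exists
for a spin-2 system. -/
theorem no_perfect_protractor_spin_two :
    ¬ ∃ ψ : Fin 5 → ℂ, (∑ i, ‖ψ i‖ ^ 2 = 1) ∧
      ∀ A ∈ ({J2x, J2y, J2z} : Set (Matrix (Fin 5) (Fin 5) ℂ)),
        ∀ (t : ℂ) (v : Fin 5 → ℂ), A.mulVec v = t • v → (∑ i, ‖v i‖ ^ 2 = 1) →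
          ‖∑ i, star (v i) * ψ i‖ ^ 2 = 1 / 5 := by
  rintro ⟨ψ, -, h⟩
  have hmx : J2x ∈ ({J2x, J2y, J2z} : Set (Matrix (Fin 5) (Fin 5) ℂ)) := by left; rfl
  have hmy : J2y ∈ ({J2x, J2y, J2z} : Set (Matrix (Fin 5) (Fin 5) ℂ)) := by right; left; rfl
  have hmz : J2z ∈ ({J2x, J2y, J2z} : Set (Matrix (Fin 5) (Fin 5) ℂ)) := by right; right; rfl
  have ha : (Real.sqrt (3/2))^2 = 3/2 := Real.sq_sqrt (by norm_num)
  have ha0 : 0 < Real.sqrt (3/2) := Real.sqrt_pos.mpr (by norm_num)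
  have haC : ((Real.sqrt (3/2):ℝ):ℂ) * ((Real.sqrt (3/2):ℝ):ℂ) = 3/2 := by
    have h0 : Real.sqrt (3/2) * Real.sqrt (3/2) = 3/2 :=
      Real.mul_self_sqrt (by norm_num)
    rw [← Complex.ofReal_mul, h0]
    norm_num
  have hb : (Real.sqrt (3/2)/2)^2 = 3/8 := by
    rw [div_pow, ha]; norm_num
  have hbn : (-(Real.sqrt (3/2)/2))^2 = 3/8 := by
    rw [neg_pow, div_pow, ha]; norm_num
  have hJx : J2x = Jxg ((Real.sqrt (3/2):ℝ):ℂ) := rfl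
  have hJy : J2y = Jyg ((Real.sqrt (3/2):ℝ):ℂ) := rfl
  -- z-basis conditions
  have hZ0 := h J2z hmz 2 _ mvZ0 (by rw [nv]; norm_num)
  have hZ1 := h J2z hmz 1 _ mvZ1 (by rw [nv]; norm_num)
  have hZ2 := h J2z hmz 0 _ mvZ2 (by rw [nv]; norm_num)
  have hZ3 := h J2z hmz (-1) _ mvZ3 (by rw [nv]; norm_num)
  have hZ4 := h J2z hmz (-2) _ mvZ4 (by rw [nv]; norm_num)
  rw [ov] at hZ0 hZ1 hZ2 hZ3 hZ4
  -- x-basis conditions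
  have hX2 := h J2x hmx 2 _ (hJx ▸ mvX2 (Real.sqrt (3/2)) haC) (by rw [nv, hb]; norm_num)
  have hXm2 := h J2x hmx (-2) _ (hJx ▸ mvXm2 (Real.sqrt (3/2)) haC) (by rw [nv, hb]; norm_num)
  have hX1 := h J2x hmx 1 _ (hJx ▸ mvX1 (Real.sqrt (3/2))) (by rw [nv]; norm_num)
  have hXm1 := h J2x hmx (-1) _ (hJx ▸ mvXm1 (Real.sqrt (3/2))) (by rw [nv]; norm_num)
  have hX0 := h J2x hmx 0 _ (hJx ▸ mvX0 (Real.sqrt (3/2))) (by rw [nv, hbn]; norm_num)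
  have hY0 := h J2y hmy 0 _ (hJy ▸ mvY0 (Real.sqrt (3/2))) (by rw [nv, hbn]; norm_num)
  rw [ov] at hX2 hXm2 hX1 hXm1 hX0 hY0
  exact protractor_key (Real.sqrt (3/2)) (ψ 0).re (ψ 1).re (ψ 2).re (ψ 3).re (ψ 4).re
    (ψ 0).im (ψ 1).im (ψ 2).im (ψ 3).im (ψ 4).im ha ha0
    (by linear_combination hZ0) (by linear_combination hZ1) (by linear_combination hZ2)
    (by linear_combination hZ3) (by linear_combination hZ4)
    (by linear_combination hX0) (by linear_combination hY0)
    (by linear_combination hX1) (by linear_combination hXm1)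
    (by linear_combination hX2) (by linear_combination hXm2)

end
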